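/- Let F be a linear functional on n×n real matrices maximized over SO(n) at R₀. Then for every R ∈ SO(n) and every index i, F(R₀ Rᵀ Dᵢ R) ≥ 0, where Dᵢ is the diagonal matrix with entries 1 at positions 2i−1 and 2i and zeros elsewhere. -/

import Mathlib

open Matrix
noncomputable section

def SO (n : ℕ) : Set (Matrix (Fin n) (Fin n) ℝ) :=
  {R | Rᵀ * R = 1 ∧ R.det = 1}

lemma SO.mul_mem {n : ℕ} {A B : Matrix (Fin n) (Fin n) ℝ}
    (hA : A ∈ SO n) (hB : B ∈ SO n) : A * B ∈ SO n := by
  obtain ⟨hA1, hA2⟩ := hA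
  obtain ⟨hB1, hB2⟩ := hB
  constructor
  · rw [transpose_mul]
    calc Bᵀ * Aᵀ * (A * B) = Bᵀ * (Aᵀ * A) * B := by noncomm_ring
    _ = 1 := by rw [hA1, mul_one, hB1]
  · rw [det_mul, hA2, hB2, mul_one]

lemma SO.transpose_mem {n : ℕ} {A : Matrix (Fin n) (Fin n) ℝ}
    (hA : A ∈ SO n) : Aᵀ ∈ SO n := by
  obtain ⟨hA1, hA2⟩ := hA
  refine ⟨?_, by rw [det_transpose, hA2]⟩
  rw [transpose_transpose]
  rwa [mul_eq_one_comm] at hA1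

/-- If `R₀` maximizes `F` over `SO(n)`, then for every `R ∈ SO(n)` and every admissible
index `i`, `F(R₀ Rᵀ Dᵢ R) ≥ 0`, where `Dᵢ` has `1` at diagonal positions `2i` and `2i+1`
(0-based) and `0` elsewhere. -/
theorem F_of_conjugated_block_diag_nonneg (n : ℕ)
    (F : Matrix (Fin n) (Fin n) ℝ →ₗ[ℝ] ℝ)
    (R₀ : Matrix (Fin n) (Fin n) ℝ) (hR₀ : R₀ ∈ SO n)
    (hmax : ∀ R ∈ SO n, F R ≤ F R₀) :
    ∀ R ∈ SO n, ∀ i : ℕ, ∀ h : 2 * i + 1 < n,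
      0 ≤ F (R₀ * Rᵀ *
        (single (⟨2 * i, by omega⟩ : Fin n) (⟨2 * i, by omega⟩ : Fin n) (1 : ℝ)
          + single (⟨2 * i + 1, h⟩ : Fin n) (⟨2 * i + 1, h⟩ : Fin n) (1 : ℝ)) * R) := by
  intro R hR i h
  set i1 : Fin n := ⟨2 * i, by omega⟩ with hi1
  set i2 : Fin n := ⟨2 * i + 1, h⟩ with hi2
  have hne : i1 ≠ i2 := by
    simp [hi1, hi2, Fin.ext_iff]
  set D : Matrix (Fin n) (Fin n) ℝ :=
    single i1 i1 (1 : ℝ) + single i2 i2 (1 : ℝ) with hD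
  have hne' : i2 ≠ i1 := hne.symm
  have hDD : D * D = D := by
    simp [hD, add_mul, mul_add, hne, hne']
  have hDt : Dᵀ = D := by
    ext j k
    simp [hD, Matrix.single, transpose_apply, and_comm]
  set A : Matrix (Fin n) (Fin n) ℝ := 1 - (D + D) with hA
  have hAt : Aᵀ = A := by
    simp [hA, transpose_sub, hDt]
  have hAA : A * A = 1 := by
    have : A * A = 1 - (D + D) - (D + D) + (D + D) * (D + D) := by
      rw [hA]; noncomm_ring
    rw [this]
    have : (D + D) * (D + D) = D + D + (D + D) := by
      rw [add_mul, mul_add, hDD]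
    rw [this]
    abel
  have hAdiag : A = diagonal (fun j => if j = i1 ∨ j = i2 then (-1 : ℝ) else 1) := by
    ext j k
    simp only [hA, hD, Matrix.sub_apply, Matrix.add_apply, one_apply, Matrix.single, of_apply,
      diagonal, Fin.ext_iff, hi1, hi2]
    split_ifs <;> first | (exfalso; omega) | norm_num
  have hdetA : A.det = 1 := by
    rw [hAdiag, det_diagonal]
    have heach : ∀ j : Fin n, (if j = i1 ∨ j = i2 then (-1 : ℝ) else 1) =
        (if j = i1 then (-1 : ℝ) else 1) * (if j = i2 then (-1 : ℝ) else 1) := by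
      intro j
      by_cases h1 : j = i1
      · subst h1
        simp [hne]
      · by_cases h2 : j = i2 <;> simp [h1, h2, hne']
    rw [Finset.prod_congr rfl (fun j _ => heach j), Finset.prod_mul_distrib]
    rw [Finset.prod_ite_eq' Finset.univ i1 (fun _ => (-1 : ℝ)),
        Finset.prod_ite_eq' Finset.univ i2 (fun _ => (-1 : ℝ))]
    simp
  have hASO : A ∈ SO n := ⟨by rw [hAt, hAA], hdetA⟩
  have hM : R₀ * Rᵀ * A * R ∈ SO n := by
    have : R₀ * Rᵀ * A * R = R₀ * (Rᵀ * (A * R)) := by noncomm_ring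
    rw [this]
    exact SO.mul_mem hR₀ (SO.mul_mem (SO.transpose_mem hR) (SO.mul_mem hASO hR))
  have hle := hmax _ hM
  have hsplit : R₀ * Rᵀ * A * R = R₀ - (R₀ * Rᵀ * D * R + R₀ * Rᵀ * D * R) := by
    have : R₀ * Rᵀ * A * R
        = R₀ * (Rᵀ * R) - (R₀ * Rᵀ * D * R + R₀ * Rᵀ * D * R) := by
      rw [hA]; noncomm_ring
    rw [this, hR.1, mul_one]
  rw [hsplit, map_sub, map_add] at hle
  linarith
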